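/- Let (X, d) be a geodesic metric space that is δ-hyperbolic for some δ ≥ 0. For every k ≥ 1 there is a constant Ñ(k) such that: for every k-quasigeodesic p : [a,b] → X and every geodesic γ from p(a) to p(b), the image of p is contained in the closed Ñ(k)-neighborhood of the image of γ. Moreover, for fixed δ, Ñ(k) can be chosen bounded above by a polynomial function of k. (Lemma 2.2.5, the quantitative Morse lemma.) -/

import Mathlib

open Metric Set

/-- A geodesic from `x` to `y`: an isometric parametrization of `[0, dist x y]`
with the correct endpoints. -/
def IsGeodesicSegment {X : Type*} [MetricSpace X] (x y : X) (γ : ℝ → X) : Prop :=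
  γ 0 = x ∧ γ (dist x y) = y ∧
    ∀ s ∈ Set.Icc (0 : ℝ) (dist x y), ∀ t ∈ Set.Icc (0 : ℝ) (dist x y),
      dist (γ s) (γ t) = |s - t|

/-- A geodesic metric space: any two points are joined by a geodesic. -/
def GeodesicSpace (X : Type*) [MetricSpace X] : Prop :=
  ∀ x y : X, ∃ γ : ℝ → X, IsGeodesicSegment x y γ

/-- `δ`-hyperbolicity via slim triangles: each side of any geodesic triangle is
contained in the closed `δ`-neighborhood of the union of the other two sides. -/
def SlimTriangles {X : Type*} [MetricSpace X] (δ : ℝ) : Prop :=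
  ∀ x y z : X, ∀ γ₁ γ₂ γ₃ : ℝ → X,
    IsGeodesicSegment x y γ₁ → IsGeodesicSegment y z γ₂ → IsGeodesicSegment x z γ₃ →
      γ₁ '' Set.Icc 0 (dist x y) ⊆
        Metric.cthickening δ (γ₂ '' Set.Icc 0 (dist y z) ∪ γ₃ '' Set.Icc 0 (dist x z)) ∧
      γ₂ '' Set.Icc 0 (dist y z) ⊆
        Metric.cthickening δ (γ₁ '' Set.Icc 0 (dist x y) ∪ γ₃ '' Set.Icc 0 (dist x z)) ∧
      γ₃ '' Set.Icc 0 (dist x z) ⊆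
        Metric.cthickening δ (γ₁ '' Set.Icc 0 (dist x y) ∪ γ₂ '' Set.Icc 0 (dist y z))

/-- A `k`-quasigeodesic defined on `[a,b]`. -/
def IsQuasigeodesic {X : Type*} [MetricSpace X] (k a b : ℝ) (p : ℝ → X) : Prop :=
  ∀ s ∈ Set.Icc a b, ∀ t ∈ Set.Icc a b,
    (1 / k) * |s - t| - k ≤ dist (p s) (p t) ∧ dist (p s) (p t) ≤ k * |s - t| + k

namespace MorseAux

variable {X : Type*} [MetricSpace X]

lemma geo_lip {x y : X} {γ : ℝ → X} (h : IsGeodesicSegment x y γ) :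
    LipschitzOnWith 1 γ (Icc 0 (dist x y)) := by
  apply LipschitzOnWith.of_dist_le_mul
  intro s hs t ht
  rw [h.2.2 s hs t ht, Real.dist_eq, NNReal.coe_one, one_mul]

lemma geo_compact {x y : X} {γ : ℝ → X} (h : IsGeodesicSegment x y γ) :
    IsCompact (γ '' Icc 0 (dist x y)) :=
  (isCompact_Icc).image_of_continuousOn (geo_lip h).continuousOn

lemma geo_nonempty {x y : X} {γ : ℝ → X} (_ : IsGeodesicSegment x y γ) :
    (γ '' Icc 0 (dist x y)).Nonempty :=
  (Set.nonempty_Icc.mpr dist_nonneg).image _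

lemma exists_near {S : Set X} (hS : IsCompact S) (hne : S.Nonempty) {δ : ℝ} (hδ : 0 ≤ δ)
    {x : X} (hx : x ∈ cthickening δ S) : ∃ z ∈ S, dist x z ≤ δ := by
  obtain ⟨z, hz, hdz⟩ := hS.exists_infDist_eq_dist hne x
  refine ⟨z, hz, ?_⟩
  rw [← hdz]
  rw [mem_cthickening_iff] at hx
  exact ENNReal.toReal_le_of_le_ofReal hδ hx

/-- Dyadic chain lemma: a point on a geodesic joining the endpoints of a chain of
`n ≤ 2^m` points with gaps `≤ g` lies within `δ'*m + g/2` of some chain point. -/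
lemma chain_lemma (δ' : ℝ) (hδ' : 0 ≤ δ') (hgeo : GeodesicSpace X) (hslim : SlimTriangles (X := X) δ')
    (g : ℝ) :
    ∀ m : ℕ, ∀ n : ℕ, 1 ≤ n → n ≤ 2 ^ m → ∀ c : ℕ → X,
      (∀ i < n, dist (c i) (c (i + 1)) ≤ g) →
      ∀ γ : ℝ → X, IsGeodesicSegment (c 0) (c n) γ →
      ∀ q ∈ γ '' Icc 0 (dist (c 0) (c n)),
        ∃ i ≤ n, dist q (c i) ≤ δ' * m + g / 2 := by
  intro m
  induction m with
  | zero =>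
    intro n hn1 hn2 c hgap γ hγ q hq
    interval_cases n
    obtain ⟨s, hs, rfl⟩ := hq
    have hd : dist (c 0) (c 1) ≤ g := hgap 0 (by norm_num)
    have h0 : dist (γ s) (c 0) = s := by
      have := hγ.2.2 s hs 0 ⟨le_refl 0, dist_nonneg⟩
      rw [hγ.1] at this; simp at this
      rw [this, abs_of_nonneg hs.1]
    have h1 : dist (γ s) (c 1) = dist (c 0) (c 1) - s := by
      have := hγ.2.2 s hs (dist (c 0) (c 1)) ⟨dist_nonneg, le_refl _⟩
      rw [hγ.2.1] at this
      rw [this, abs_of_nonpos (by linarith [hs.2]), neg_sub]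
    rcases le_or_gt s (dist (c 0) (c 1) / 2) with h | h
    · exact ⟨0, by norm_num, by rw [h0]; push_cast; linarith⟩
    · exact ⟨1, le_refl _, by rw [h1]; push_cast; linarith⟩
  | succ m ih =>
    intro n hn1 hn2 c hgap γ hγ q hq
    rcases le_or_gt n (2 ^ m) with hle | hlt
    · obtain ⟨i, hi, hd⟩ := ih n hn1 hle c hgap γ hγ q hq
      exact ⟨i, hi, hd.trans (by push_cast; nlinarith)⟩
    · set j : ℕ := 2 ^ m with hj
      have hj1 : 1 ≤ j := Nat.one_le_two_pow
      have hjn : j < n := hlt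
      have hnj : n - j ≤ 2 ^ m := by
        have : n ≤ 2 ^ m + 2 ^ m := by
          have := hn2; rw [pow_succ] at this; omega
        omega
      obtain ⟨γ₁, hγ₁⟩ := hgeo (c 0) (c j)
      obtain ⟨γ₂, hγ₂⟩ := hgeo (c j) (c n)
      have hsl := (hslim (c 0) (c j) (c n) γ₁ γ₂ γ hγ₁ hγ₂ hγ).2.2
      have hcpt : IsCompact (γ₁ '' Icc 0 (dist (c 0) (c j)) ∪ γ₂ '' Icc 0 (dist (c j) (c n))) :=
        (geo_compact hγ₁).union (geo_compact hγ₂)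
      have hne : (γ₁ '' Icc 0 (dist (c 0) (c j)) ∪ γ₂ '' Icc 0 (dist (c j) (c n))).Nonempty :=
        (geo_nonempty hγ₁).mono subset_union_left
      obtain ⟨q', hq', hdq'⟩ := exists_near hcpt hne hδ' (hsl hq)
      rcases hq' with hq' | hq'
      · obtain ⟨i, hi, hd⟩ := ih j hj1 (le_refl _) c (fun i hi => hgap i (hi.trans hjn)) γ₁ hγ₁ q' hq'
        refine ⟨i, le_of_lt (lt_of_le_of_lt hi hjn), ?_⟩
        calc dist q (c i) ≤ dist q q' + dist q' (c i) := dist_triangle _ _ _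
          _ ≤ δ' + (δ' * m + g / 2) := add_le_add hdq' hd
          _ = δ' * (m + 1 : ℕ) + g / 2 := by push_cast; ring
      · have hnj1 : 1 ≤ n - j := by omega
        have hjn' : j + (n - j) = n := by omega
        obtain ⟨i, hi, hd⟩ := ih (n - j) hnj1 hnj (fun i => c (j + i))
          (fun i hi => by
            have := hgap (j + i) (by omega)
            simpa [Nat.add_assoc] using this)
          γ₂ (show IsGeodesicSegment (c (j + 0)) (c (j + (n - j))) γ₂ by
              rw [Nat.add_zero, hjn']; exact hγ₂)
          q' (show q' ∈ γ₂ '' Icc 0 (dist (c (j + 0)) (c (j + (n - j)))) by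
              rw [Nat.add_zero, hjn']; exact hq')
        refine ⟨j + i, by omega, ?_⟩
        calc dist q (c (j + i)) ≤ dist q q' + dist q' (c (j + i)) := dist_triangle _ _ _
          _ ≤ δ' + (δ' * m + g / 2) := add_le_add hdq' hd
          _ = δ' * (m + 1 : ℕ) + g / 2 := by push_cast; ring

end MorseAux


noncomputable section

namespace MorseAux

/-- The constant for direction 1. -/
def Rbound (dl k : ℝ) : ℝ :=
  (8/3) * (dl + (dl / Real.log 2) * (11 + Real.log (8 * dl / Real.log 2)) + 1) +
    (8/3) * ((dl / Real.log 2) * 2 + 1) * k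

variable {X : Type*} [MetricSpace X]

lemma mem_of_between {a b u v θ : ℝ} (hu : u ∈ Icc a b) (hv : v ∈ Icc a b)
    (hθ : θ ∈ Icc (0:ℝ) 1) : u + θ * (v - u) ∈ Icc a b := by
  obtain ⟨hu1, hu2⟩ := hu; obtain ⟨hv1, hv2⟩ := hv; obtain ⟨hθ1, hθ2⟩ := hθ
  constructor
  · nlinarith
  · nlinarith

lemma solve_bound {δ' k D g : ℝ} {m K : ℕ} (hδ' : 1 ≤ δ') (hk : 1 ≤ k) (hD0 : 0 ≤ D)
    (hmdef : m = Nat.clog 2 (K + 2)) (hK1 : 1 ≤ K)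
    (hKbound : (K:ℝ) ≤ k * (6*D+2) + k^2 + 2)
    (hgbound : g ≤ 2*k + (D+1))
    (hDB : D ≤ δ' * m + g / 2) : D ≤ Rbound δ' k := by
  have hδ'0 : (0:ℝ) < δ' := by linarith
  have hk0 : (0:ℝ) < k := by linarith
  set L := Real.log 2 with hLdef
  have hL : 0 < L := Real.log_pos one_lt_two
  have hK2pos : (0:ℝ) < (K:ℝ) + 2 := by positivity
  have hmlog : (m:ℝ) * L ≤ L + Real.log ((K:ℝ)+2) := by
    rcases Nat.eq_zero_or_pos m with hmz | hm1
    · rw [hmz, Nat.cast_zero, zero_mul]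
      have h6 : 0 ≤ Real.log ((K:ℝ)+2) := Real.log_nonneg (by
        have : (1:ℝ) ≤ (K:ℝ) := by exact_mod_cast hK1
        linarith)
      linarith
    · have h2 : 2 ^ (m-1) < K + 2 := by
        rw [hmdef]; exact Nat.pow_pred_clog_lt_self one_lt_two (x := K + 2) (by omega)
      have h2r : (2:ℝ) ^ (m-1) < (K:ℝ) + 2 := by exact_mod_cast h2
      have h3 : Real.log ((2:ℝ)^(m-1)) = ((m:ℝ) - 1) * L := by
        rw [Real.log_pow, ← hLdef]
        have hc : ((m-1:ℕ):ℝ) = (m:ℝ) - 1 := by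
          rw [Nat.cast_sub hm1]; push_cast; ring
        rw [hc]
      have h4 : Real.log ((2:ℝ)^(m-1)) ≤ Real.log ((K:ℝ)+2) :=
        Real.log_le_log (by positivity) (le_of_lt h2r)
      rw [h3] at h4
      linarith
  have hkk : k ≤ k^2 := by nlinarith
  have hk2 : (1:ℝ) ≤ k^2 := by nlinarith
  have hK2 : (K:ℝ) + 2 ≤ 12 * k^2 * (D+1) := by
    have hkD : k*D ≤ k^2*D := mul_le_mul_of_nonneg_right hkk hD0
    nlinarith [hKbound, hkD, hkk, hk2, hD0]
  have hlogK : Real.log ((K:ℝ)+2) ≤ Real.log 12 + 2 * Real.log k + Real.log (D+1) := by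
    have h1 : Real.log ((K:ℝ)+2) ≤ Real.log (12 * k^2 * (D+1)) :=
      Real.log_le_log hK2pos hK2
    rw [Real.log_mul (by positivity) (by positivity),
      Real.log_mul (by norm_num) (by positivity), Real.log_pow] at h1
    push_cast at h1
    linarith
  have hlog12 : Real.log 12 ≤ 11 := by
    have := Real.log_le_sub_one_of_pos (by norm_num : (0:ℝ) < 12); linarith
  have hlogk : Real.log k ≤ k := by
    have := Real.log_le_sub_one_of_pos hk0; linarith
  set M := 8 * δ' / L with hMdef
  have hM0 : 0 < M := by positivity
  have hlogD : Real.log (D+1) ≤ (D+1)/M + Real.log M := by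
    have h1 : Real.log ((D+1)/M) ≤ (D+1)/M - 1 :=
      Real.log_le_sub_one_of_pos (by positivity)
    rw [Real.log_div (by positivity) (ne_of_gt hM0)] at h1
    linarith
  have hsub : (δ'/L) * ((D+1)/M) = (D+1)/8 := by
    rw [hMdef]
    field_simp
  have hlogKfull : Real.log ((K:ℝ)+2) ≤ 11 + 2*k + (D+1)/M + Real.log M := by
    linarith
  have hAL : (0:ℝ) ≤ δ'/L := le_of_lt (div_pos hδ'0 hL)
  have h8 := mul_le_mul_of_nonneg_left hmlog hAL
  have h9 : (δ'/L) * ((m:ℝ)*L) = δ' * m := by field_simp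
  have h10 : (δ'/L) * (L + Real.log ((K:ℝ)+2)) = δ' + (δ'/L) * Real.log ((K:ℝ)+2) := by
    field_simp
  have h11 := mul_le_mul_of_nonneg_left hlogKfull hAL
  have h12 : (δ'/L) * (11 + 2*k + (D+1)/M + Real.log M)
      = (δ'/L)*11 + ((δ'/L)*2)*k + (δ'/L)*((D+1)/M) + (δ'/L)*Real.log M := by ring
  have hfinal : D ≤ δ' + (δ'/L)*11 + ((δ'/L)*2)*k + (D+1)/8 + (δ'/L)*Real.log M
      + k + (D+1)/2 := by
    rw [h9, h10] at h8
    rw [h12, hsub] at h11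
    linarith
  show D ≤ Rbound δ' k
  unfold Rbound
  rw [← hLdef, ← hMdef]
  linarith [hfinal]

lemma dir1 (hgeo : GeodesicSpace X) {δ' : ℝ} (hδ' : 1 ≤ δ')
    (hslim : SlimTriangles (X := X) δ')
    {k a b : ℝ} (hk : 1 ≤ k) (hab : a ≤ b) {p : ℝ → X} (hp : IsQuasigeodesic k a b p)
    {γ : ℝ → X} (hγ : IsGeodesicSegment (p a) (p b) γ) :
    ∀ s ∈ Icc (0:ℝ) (dist (p a) (p b)),
      infDist (γ s) (p '' Icc a b) ≤ Rbound δ' k := by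
  have hδ'0 : (0:ℝ) < δ' := by linarith
  have hk0 : (0:ℝ) < k := by linarith
  set w := dist (p a) (p b) with hw
  have hw0 : 0 ≤ w := dist_nonneg
  set P := p '' Icc a b with hP
  have hPne : P.Nonempty := ⟨p a, ⟨a, ⟨le_refl a, hab⟩, rfl⟩⟩
  have hcont : ContinuousOn (fun s => infDist (γ s) P) (Icc 0 w) :=
    (Metric.continuous_infDist_pt P).comp_continuousOn (geo_lip hγ).continuousOn
  obtain ⟨s₀, hs₀, hmax⟩ := isCompact_Icc.exists_isMaxOn (Set.nonempty_Icc.mpr hw0) hcont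
  set D := infDist (γ s₀) P with hD
  have hD0 : 0 ≤ D := infDist_nonneg
  suffices hkey : D ≤ Rbound δ' k by
    intro s hs; exact (hmax hs).trans hkey
  set s₁ := max 0 (s₀ - 2*D) with hs₁def
  set s₂ := min w (s₀ + 2*D) with hs₂def
  have hs₁0 : 0 ≤ s₁ := le_max_left _ _
  have hs₁s₀ : s₁ ≤ s₀ := max_le hs₀.1 (by linarith)
  have hs₀s₂ : s₀ ≤ s₂ := le_min hs₀.2 (by linarith)
  have hs₂w : s₂ ≤ w := min_le_left _ _
  have hs₁near : s₀ - s₁ ≤ 2*D := by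
    have := le_max_right 0 (s₀ - 2*D); linarith
  have hs₂near : s₂ - s₀ ≤ 2*D := by
    have := min_le_right w (s₀ + 2*D); linarith
  have hs₁w : s₁ ≤ w := hs₁s₀.trans hs₀.2
  have hs₂0 : 0 ≤ s₂ := hs₁0.trans (hs₁s₀.trans hs₀s₂)
  set y := γ s₁ with hy
  set z := γ s₂ with hz
  have hyD : infDist y P ≤ D := hmax ⟨hs₁0, hs₁w⟩
  have hzD : infDist z P ≤ D := hmax ⟨hs₂0, hs₂w⟩
  obtain ⟨qy, hqy, hqyd⟩ := (infDist_lt_iff hPne).1 (lt_of_le_of_lt hyD (by linarith : D < D + 1))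
  obtain ⟨qz, hqz, hqzd⟩ := (infDist_lt_iff hPne).1 (lt_of_le_of_lt hzD (by linarith : D < D + 1))
  obtain ⟨u, hu, rfl⟩ := hqy
  obtain ⟨v, hv, rfl⟩ := hqz
  have hyz : dist y z = s₂ - s₁ := by
    rw [hγ.2.2 s₁ ⟨hs₁0, hs₁w⟩ s₂ ⟨hs₂0, hs₂w⟩, abs_of_nonpos (by linarith), neg_sub]
  have hduv : dist (p u) (p v) ≤ 6*D + 2 := by
    calc dist (p u) (p v) ≤ dist (p u) y + dist y z + dist z (p v) := dist_triangle4 _ _ _ _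
      _ ≤ (D+1) + (4*D) + (D+1) := by
          refine add_le_add (add_le_add ?_ ?_) ?_
          · rw [dist_comm]; linarith
          · rw [hyz]; linarith
          · linarith
      _ ≤ 6*D + 2 := by linarith
  have hΔ : |v - u| ≤ k * (6*D + 2) + k^2 := by
    have h1 := (hp u hu v hv).1
    rw [abs_sub_comm] at h1
    have h3 : (1/k) * |v - u| ≤ (6*D + 2) + k := by linarith
    calc |v - u| = k * ((1/k) * |v - u|) := by field_simp
      _ ≤ k * ((6*D + 2) + k) := mul_le_mul_of_nonneg_left h3 (le_of_lt hk0)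
      _ = k * (6*D + 2) + k^2 := by ring
  set K : ℕ := ⌈|v - u|⌉₊ + 1 with hKdef
  have hK1 : 1 ≤ K := by omega
  have hK0 : (0:ℝ) < K := by positivity
  have hKne : (K:ℝ) ≠ 0 := ne_of_gt hK0
  have hKΔ : |v - u| ≤ K := by
    have h := Nat.le_ceil |v - u|
    have h2 : ((⌈|v - u|⌉₊ : ℝ)) ≤ (K:ℝ) := by
      rw [hKdef]; push_cast; linarith
    linarith
  have hKup : (K:ℝ) ≤ |v - u| + 2 := by
    have h := Nat.ceil_lt_add_one (abs_nonneg (v - u))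
    rw [hKdef]; push_cast; linarith
  set T : ℕ → ℝ := fun j => u + ((j:ℝ) - 1) * (v - u) / K with hTdef
  set c : ℕ → X := fun i => if i = 0 then y else if K + 2 ≤ i then z else p (T i) with hcdef
  have hc0 : c 0 = y := by simp [hcdef]
  have hcn : c (K + 2) = z := by simp [hcdef]
  have hT1 : T 1 = u := by simp [hTdef]
  have hTK : T (K+1) = v := by
    simp only [hTdef]
    push_cast
    field_simp
    ring
  have hTd : ∀ i : ℕ, |T i - T (i+1)| = |v - u| / K := by
    intro i
    have he : T i - T (i+1) = -((v - u) / K) := by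
      simp only [hTdef]; push_cast; ring
    rw [he, abs_neg, abs_div, abs_of_pos hK0]
  have hparam : ∀ i : ℕ, 1 ≤ i → i ≤ K + 1 → T i ∈ Icc a b := by
    intro i hi1 hi2
    have h1 : (0:ℝ) ≤ ((i:ℝ) - 1) / K := by
      apply div_nonneg _ (le_of_lt hK0)
      have : (1:ℝ) ≤ (i:ℝ) := by exact_mod_cast hi1
      linarith
    have h2 : ((i:ℝ) - 1) / K ≤ 1 := by
      rw [div_le_one hK0]
      have : (i:ℝ) ≤ (K:ℝ) + 1 := by exact_mod_cast hi2
      linarith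
    have h3 := mem_of_between hu hv (⟨h1, h2⟩ : ((i:ℝ) - 1) / K ∈ Icc (0:ℝ) 1)
    have h4 : T i = u + ((i:ℝ) - 1) / K * (v - u) := by
      simp only [hTdef]; ring
    rw [h4]; exact h3
  have hci : ∀ i : ℕ, 1 ≤ i → i ≤ K + 1 → c i = p (T i) := by
    intro i h1 h2
    simp only [hcdef]
    rw [if_neg (by omega), if_neg (by omega)]
  set g := max (2*k) (D+1) with hgdef
  have hgap : ∀ i < K + 2, dist (c i) (c (i+1)) ≤ g := by
    intro i hi
    rcases Nat.eq_zero_or_pos i with rfl | hi1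
    · rw [hc0, show (0+1 : ℕ) = 1 from rfl, hci 1 (le_refl _) (by omega), hT1]
      exact le_trans (le_of_lt hqyd) (le_max_right _ _)
    · rcases eq_or_lt_of_le (Nat.succ_le_of_lt hi) with heq | hlt
      · have hiK : i = K + 1 := by omega
        subst hiK
        rw [hci (K+1) (by omega) (le_refl _), hTK, show (K+1+1 : ℕ) = K+2 from rfl, hcn,
          dist_comm]
        exact le_trans (le_of_lt hqzd) (le_max_right _ _)
      · have hiK : i ≤ K := by omega
        rw [hci i hi1 (by omega), hci (i+1) (by omega) (by omega)]
        have hqd := (hp _ (hparam i hi1 (by omega)) _ (hparam (i+1) (by omega) (by omega))).2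
        rw [hTd i] at hqd
        have hle1 : |v - u| / K ≤ 1 := by rw [div_le_one hK0]; exact hKΔ
        have hle2 : k * (|v - u| / K) ≤ k * 1 :=
          mul_le_mul_of_nonneg_left hle1 (le_of_lt hk0)
        apply le_trans hqd
        apply le_max_of_le_left
        linarith
  -- the geodesic from y to z
  set γ' : ℝ → X := fun s => γ (s₁ + s) with hγ'def
  have hγ'seg : IsGeodesicSegment y z γ' := by
    refine ⟨?_, ?_, ?_⟩
    · simp only [hγ'def]; rw [add_zero]
    · simp only [hγ'def]; rw [hyz, hz]; congr 1; ring
    · intro s hs t ht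
      rw [hyz] at hs ht
      simp only [hγ'def]
      rw [hγ.2.2 (s₁ + s) ⟨by linarith [hs.1], by linarith [hs.2]⟩
        (s₁ + t) ⟨by linarith [ht.1], by linarith [ht.2]⟩]
      congr 1; ring
  have hγ'c : IsGeodesicSegment (c 0) (c (K+2)) γ' := by rw [hc0, hcn]; exact hγ'seg
  have hq : γ s₀ ∈ γ' '' Icc 0 (dist (c 0) (c (K+2))) := by
    rw [hc0, hcn, hyz]
    exact ⟨s₀ - s₁, ⟨by linarith, by linarith⟩, by simp only [hγ'def]; congr 1; ring⟩
  set m := Nat.clog 2 (K+2) with hmdef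
  have hnm : K + 2 ≤ 2 ^ m := Nat.le_pow_clog one_lt_two _
  obtain ⟨i, hi, hB⟩ := chain_lemma δ' (by linarith) hgeo hslim g m (K+2) (by omega) hnm c
    hgap γ' hγ'c (γ s₀) hq
  have hg0 : 0 ≤ g := le_trans (by linarith) (le_max_left (2*k) (D+1))
  have hm0 : (0:ℝ) ≤ (m:ℝ) := Nat.cast_nonneg m
  have hDB : D ≤ δ' * m + g / 2 := by
    rcases Nat.eq_zero_or_pos i with rfl | hi1
    · rw [hc0] at hB
      rcases max_choice 0 (s₀ - 2*D) with h | h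
      · rw [← hs₁def] at h
        have hyP : y ∈ P := ⟨a, ⟨le_refl a, hab⟩, by rw [hy, h]; exact hγ.1.symm⟩
        have h5 : D ≤ dist (γ s₀) y := infDist_le_dist_of_mem hyP
        linarith
      · rw [← hs₁def] at h
        have h5 : dist (γ s₀) y = 2*D := by
          rw [hy, hγ.2.2 s₀ hs₀ s₁ ⟨hs₁0, hs₁w⟩, h,
            show s₀ - (s₀ - 2*D) = 2*D by ring]
          exact abs_of_nonneg (by linarith)
        linarith
    · rcases le_or_gt (K+2) i with hge | hlt2
      · have hieq : i = K + 2 := le_antisymm hi hge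
        subst hieq
        rw [hcn] at hB
        rcases min_choice w (s₀ + 2*D) with h | h
        · rw [← hs₂def] at h
          have hzP : z ∈ P := ⟨b, ⟨hab, le_refl b⟩, by rw [hz, h]; exact hγ.2.1.symm⟩
          have h5 : D ≤ dist (γ s₀) z := infDist_le_dist_of_mem hzP
          linarith
        · rw [← hs₂def] at h
          have h5 : dist (γ s₀) z = 2*D := by
            rw [hz, hγ.2.2 s₀ hs₀ s₂ ⟨hs₂0, hs₂w⟩, h,
              show s₀ - (s₀ + 2*D) = -(2*D) by ring, abs_neg]
            exact abs_of_nonneg (by linarith)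
          linarith
      · have hciP : c i ∈ P := by
          rw [hci i hi1 (by omega)]
          exact ⟨T i, hparam i hi1 (by omega), rfl⟩
        have h5 : D ≤ dist (γ s₀) (c i) := infDist_le_dist_of_mem hciP
        linarith
  exact solve_bound hδ' hk hD0 hmdef hK1 (by linarith) (max_le (by linarith) (by linarith)) hDB

def Acoef (dl : ℝ) : ℝ :=
  (8/3) * (dl + (dl / Real.log 2) * (11 + Real.log (8 * dl / Real.log 2)) + 1)

def Bcoef (dl : ℝ) : ℝ := (8/3) * ((dl / Real.log 2) * 2 + 1)

lemma Rbound_eq (dl k : ℝ) : Rbound dl k = Acoef dl + Bcoef dl * k := rfl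

/-- The final Morse constant. -/
def Nfun (dl k : ℝ) : ℝ :=
  Rbound dl k + 1 + k * (k * (2 * Rbound dl k + 4 + k) + 1) + k

lemma Nfun_poly (dl k : ℝ) :
    Nfun dl k = (Polynomial.C (Acoef dl + 1) + Polynomial.C (Bcoef dl + 2) * Polynomial.X +
      Polynomial.C (2 * Acoef dl + 4) * Polynomial.X ^ 2 +
      Polynomial.C (2 * Bcoef dl + 1) * Polynomial.X ^ 3).eval k := by
  simp only [Nfun, Rbound_eq, Polynomial.eval_add, Polynomial.eval_mul, Polynomial.eval_pow,
    Polynomial.eval_C, Polynomial.eval_X]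
  ring

lemma dir2 (hgeo : GeodesicSpace X) {δ' : ℝ} (hδ' : 1 ≤ δ')
    (hslim : SlimTriangles (X := X) δ')
    {k a b : ℝ} (hk : 1 ≤ k) (hab : a ≤ b) {p : ℝ → X} (hp : IsQuasigeodesic k a b p)
    {γ : ℝ → X} (hγ : IsGeodesicSegment (p a) (p b) γ) :
    ∀ t ∈ Icc a b, infDist (p t) (γ '' Icc 0 (dist (p a) (p b))) ≤ Nfun δ' k := by
  intro t ht
  have hk0 : (0:ℝ) < k := by linarith
  set w := dist (p a) (p b) with hw
  have hw0 : 0 ≤ w := dist_nonneg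
  set G := γ '' Icc 0 w with hG
  set P := p '' Icc a b with hP
  have hPne : P.Nonempty := ⟨p a, ⟨a, ⟨le_refl a, hab⟩, rfl⟩⟩
  have hGc : IsCompact G := geo_compact hγ
  have hGne : G.Nonempty := geo_nonempty hγ
  set R := Rbound δ' k with hR
  have hdir1 := dir1 hgeo hδ' hslim hk hab hp hγ
  have hR0 : 0 ≤ R := le_trans infDist_nonneg (hdir1 0 ⟨le_refl _, hw0⟩)
  have hpaG : p a ∈ G := ⟨0, ⟨le_refl _, hw0⟩, hγ.1⟩
  have hpbG : p b ∈ G := ⟨w, ⟨hw0, le_refl _⟩, hγ.2.1⟩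
  set S₁ := {x : ℝ | x ∈ Icc a t ∧ infDist (p x) G ≤ R + 1} with hS₁def
  set S₂ := {x : ℝ | x ∈ Icc t b ∧ infDist (p x) G ≤ R + 1} with hS₂def
  have haS₁ : a ∈ S₁ := ⟨⟨le_refl a, ht.1⟩, by rw [infDist_zero_of_mem hpaG]; linarith⟩
  have hbS₂ : b ∈ S₂ := ⟨⟨ht.2, le_refl b⟩, by rw [infDist_zero_of_mem hpbG]; linarith⟩
  have hS₁ne : S₁.Nonempty := ⟨a, haS₁⟩
  have hS₂ne : S₂.Nonempty := ⟨b, hbS₂⟩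
  have hbdd₁ : BddAbove S₁ := BddAbove.mono (fun x hx => hx.1) bddAbove_Icc
  have hbdd₂ : BddBelow S₂ := BddBelow.mono (fun x hx => hx.1) bddBelow_Icc
  set t₁ := sSup S₁ with ht₁def
  set t₂ := sInf S₂ with ht₂def
  have hat₁ : a ≤ t₁ := le_csSup hbdd₁ haS₁
  have ht₁t : t₁ ≤ t := csSup_le hS₁ne (fun x hx => hx.1.2)
  have htt₂ : t ≤ t₂ := le_csInf hS₂ne (fun x hx => hx.1.1)
  have ht₂b : t₂ ≤ b := csInf_le hbdd₂ hbS₂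
  set A' := {x : X | infDist x (p '' Icc a t₁) ≤ R + 1} with hA'def
  set B' := {x : X | infDist x (p '' Icc t₂ b) ≤ R + 1} with hB'def
  have hA'closed : IsClosed A' := isClosed_le (Metric.continuous_infDist_pt _) continuous_const
  have hB'closed : IsClosed B' := isClosed_le (Metric.continuous_infDist_pt _) continuous_const
  have hcov : G ⊆ A' ∪ B' := by
    rintro x ⟨s, hs, rfl⟩
    have h1 : infDist (γ s) P < R + 1 := lt_of_le_of_lt (hdir1 s hs) (by linarith)
    obtain ⟨q, hq, hdq⟩ := (infDist_lt_iff hPne).1 h1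
    obtain ⟨u', hu', rfl⟩ := hq
    have hu'G : infDist (p u') G ≤ R + 1 := by
      refine le_trans (infDist_le_dist_of_mem ⟨s, hs, rfl⟩) ?_
      rw [dist_comm]; linarith
    rcases le_or_gt u' t with hle | hgt
    · have hmem : u' ∈ S₁ := ⟨⟨hu'.1, hle⟩, hu'G⟩
      have hu't₁ : u' ≤ t₁ := le_csSup hbdd₁ hmem
      have hmem2 : p u' ∈ p '' Icc a t₁ := ⟨u', ⟨hu'.1, hu't₁⟩, rfl⟩
      exact Or.inl (le_trans (infDist_le_dist_of_mem hmem2) (le_of_lt hdq))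
    · have hmem : u' ∈ S₂ := ⟨⟨le_of_lt hgt, hu'.2⟩, hu'G⟩
      have ht₂u' : t₂ ≤ u' := csInf_le hbdd₂ hmem
      have hmem2 : p u' ∈ p '' Icc t₂ b := ⟨u', ⟨ht₂u', hu'.2⟩, rfl⟩
      exact Or.inr (le_trans (infDist_le_dist_of_mem hmem2) (le_of_lt hdq))
  have hGpre : IsPreconnected G := (isPreconnected_Icc).image γ (geo_lip hγ).continuousOn
  have hmemA : p a ∈ A' := by
    have h0 : infDist (p a) (p '' Icc a t₁) = 0 :=
      infDist_zero_of_mem ⟨a, ⟨le_refl a, hat₁⟩, rfl⟩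
    simp only [hA'def, mem_setOf_eq, h0]; linarith
  have hmemB : p b ∈ B' := by
    have h0 : infDist (p b) (p '' Icc t₂ b) = 0 :=
      infDist_zero_of_mem ⟨b, ⟨ht₂b, le_refl b⟩, rfl⟩
    simp only [hB'def, mem_setOf_eq, h0]; linarith
  obtain ⟨xs, hxsG, hxsA, hxsB⟩ := isPreconnected_closed_iff.1 hGpre A' B'
    hA'closed hB'closed hcov ⟨p a, hpaG, hmemA⟩ ⟨p b, hpbG, hmemB⟩
  have hne₁ : (p '' Icc a t₁).Nonempty := ⟨p a, a, ⟨le_refl a, hat₁⟩, rfl⟩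
  have hne₂ : (p '' Icc t₂ b).Nonempty := ⟨p b, b, ⟨ht₂b, le_refl b⟩, rfl⟩
  obtain ⟨q₁, hq₁, hd₁⟩ := (infDist_lt_iff hne₁).1
    (lt_of_le_of_lt hxsA (by linarith : R + 1 < R + 2))
  obtain ⟨q₂, hq₂, hd₂⟩ := (infDist_lt_iff hne₂).1
    (lt_of_le_of_lt hxsB (by linarith : R + 1 < R + 2))
  obtain ⟨u, hu, rfl⟩ := hq₁
  obtain ⟨u', hu', rfl⟩ := hq₂
  have hdd : dist (p u) (p u') ≤ 2*R + 4 := by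
    calc dist (p u) (p u') ≤ dist (p u) xs + dist xs (p u') := dist_triangle _ _ _
      _ ≤ (R+2) + (R+2) := by
          refine add_le_add ?_ (le_of_lt hd₂)
          rw [dist_comm]; exact le_of_lt hd₁
      _ = 2*R + 4 := by ring
  have huab : u ∈ Icc a b := ⟨hu.1, le_trans hu.2 (le_trans ht₁t ht.2)⟩
  have hu'ab : u' ∈ Icc a b := ⟨le_trans ht.1 (le_trans htt₂ hu'.1), hu'.2⟩
  have hΛ : |u - u'| ≤ k * (2*R + 4 + k) := by
    have h1 := (hp u huab u' hu'ab).1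
    have h3 : (1/k) * |u - u'| ≤ (2*R + 4) + k := by linarith
    calc |u - u'| = k * ((1/k) * |u - u'|) := by field_simp
      _ ≤ k * ((2*R + 4) + k) := mul_le_mul_of_nonneg_left h3 (le_of_lt hk0)
      _ = k * (2*R + 4 + k) := by ring
  have htt : t₂ - t₁ ≤ k * (2*R + 4 + k) := by
    have h4 : u' - u ≤ |u - u'| := by rw [abs_sub_comm]; exact le_abs_self _
    have h5 : u ≤ t₁ := hu.2
    have h6 : t₂ ≤ u' := hu'.1
    linarith
  obtain ⟨u₁, hu₁S, hu₁gt⟩ := exists_lt_of_lt_csSup hS₁ne (show t₁ - 1 < t₁ by linarith)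
  have hu₁le : u₁ ≤ t₁ := le_csSup hbdd₁ hu₁S
  have hu₁ab : u₁ ∈ Icc a b := ⟨hu₁S.1.1, le_trans hu₁S.1.2 ht.2⟩
  have hdtu₁ : dist (p t) (p u₁) ≤ k * (k * (2*R + 4 + k) + 1) + k := by
    have h7 := (hp t ht u₁ hu₁ab).2
    have h8 : |t - u₁| = t - u₁ := abs_of_nonneg (by linarith [hu₁S.1.2])
    have h9 : t - u₁ ≤ k * (2*R + 4 + k) + 1 := by linarith
    rw [h8] at h7
    have h10 : k * (t - u₁) ≤ k * (k * (2*R + 4 + k) + 1) :=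
      mul_le_mul_of_nonneg_left h9 (le_of_lt hk0)
    linarith
  calc infDist (p t) G ≤ infDist (p u₁) G + dist (p t) (p u₁) :=
        infDist_le_infDist_add_dist
    _ ≤ (R + 1) + (k * (k * (2*R + 4 + k) + 1) + k) := add_le_add hu₁S.2 hdtu₁
    _ = Nfun δ' k := by rw [Nfun]; ring

end MorseAux



/-- **Lemma 2.2.5 (quantitative Morse lemma).** In a `δ`-hyperbolic geodesic space,
every `k`-quasigeodesic stays within distance `Ñ(k)` of any geodesic with the same
endpoints, and `Ñ(k)` may be chosen bounded by a polynomial in `k`. -/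
theorem stmt_6 {X : Type*} [MetricSpace X] (hgeo : GeodesicSpace X)
    (δ : ℝ) (hδ : 0 ≤ δ) (hslim : SlimTriangles (X := X) δ) :
    ∃ N : ℝ → ℝ,
      (∃ Q : Polynomial ℝ, ∀ k : ℝ, 1 ≤ k → N k ≤ Q.eval k) ∧
      ∀ k : ℝ, 1 ≤ k → ∀ a b : ℝ, a ≤ b → ∀ p : ℝ → X, IsQuasigeodesic k a b p →
        ∀ γ : ℝ → X, IsGeodesicSegment (p a) (p b) γ →
          p '' Set.Icc a b ⊆
            Metric.cthickening (N k) (γ '' Set.Icc 0 (dist (p a) (p b))) := by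
  set δ' := max δ 1 with hδ'def
  have hδ'1 : 1 ≤ δ' := le_max_right δ 1
  have hslim' : SlimTriangles (X := X) δ' := by
    intro x y z γ₁ γ₂ γ₃ h1 h2 h3
    obtain ⟨c1, c2, c3⟩ := hslim x y z γ₁ γ₂ γ₃ h1 h2 h3
    exact ⟨c1.trans (Metric.cthickening_mono (le_max_left δ 1) _),
           c2.trans (Metric.cthickening_mono (le_max_left δ 1) _),
           c3.trans (Metric.cthickening_mono (le_max_left δ 1) _)⟩
  refine ⟨MorseAux.Nfun δ', ⟨_, fun k _ => le_of_eq (MorseAux.Nfun_poly δ' k)⟩, ?_⟩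
  intro k hk a b hab p hp γ hγ
  rintro x ⟨t, ht, rfl⟩
  have hinf := MorseAux.dir2 hgeo hδ'1 hslim' hk hab hp hγ t ht
  have hN0 : 0 ≤ MorseAux.Nfun δ' k := le_trans infDist_nonneg hinf
  have hGne := MorseAux.geo_nonempty hγ
  rw [Metric.mem_cthickening_iff]
  exact (ENNReal.le_ofReal_iff_toReal_le (Metric.infEdist_ne_top hGne) hN0).mpr hinf
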